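/- Let n ≥ 2, let k₀, k₁, …, kₙ ∈ ℤ satisfy k₁ + ⋯ + kₙ = 0, and let μ₀, μ₁, …, μₙ ∈ ℝ. Then the quantity μ₀k₀ + μ₁k₁ + ⋯ + μₙkₙ is invariant under the rotation map: with tildes denoting the rotated tuple, μ₀k̃₀ + μ̃₁k̃₁ + ⋯ + μ̃ₙk̃ₙ = μ₀k₀ + μ₁k₁ + ⋯ + μₙkₙ. -/

import Mathlib

open Finset

/-- The rotated charges: `k̃₀ = k₀ + k₁`, `k̃ⱼ = k_{j+1}` for `1 ≤ j ≤ n-1`, `k̃ₙ = k₁`. -/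
def rotK (n : ℕ) (k : ℕ → ℤ) : ℕ → ℤ :=
  fun j => if j = 0 then k 0 + k 1 else if j = n then k 1 else k (j + 1)

/-- The rotated masses: `μ̃ⱼ = μ₀/n + μ_{j+1}` for `1 ≤ j ≤ n-1`, `μ̃ₙ = μ₁ - (n-1)μ₀/n`;
`μ₀` is unchanged. -/
noncomputable def rotMu (n : ℕ) (μ₀ : ℝ) (μ : ℕ → ℝ) : ℕ → ℝ :=
  fun j => if j = n then μ 1 - ((n : ℝ) - 1) * μ₀ / n else μ₀ / n + μ (j + 1)

/-- The quantity `μ₀k₀ + μ₁k₁ + ⋯ + μₙkₙ` is invariant under the rotation map. -/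
theorem rotation_invariant_charge
    (n : ℕ) (hn : 2 ≤ n) (k : ℕ → ℤ) (μ₀ : ℝ) (μ : ℕ → ℝ)
    (h1 : ∑ j ∈ Icc 1 n, k j = 0) :
    μ₀ * (rotK n k 0 : ℝ) + ∑ j ∈ Icc 1 n, rotMu n μ₀ μ j * (rotK n k j : ℝ) =
      μ₀ * (k 0 : ℝ) + ∑ j ∈ Icc 1 n, μ j * (k j : ℝ) := by
  obtain ⟨m, rfl⟩ : ∃ m, n = m + 1 := ⟨n - 1, by omega⟩
  have hm : 1 ≤ m := by omega
  have hnr : ((m : ℝ) + 1) ≠ 0 := by positivity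
  rw [← Finset.Ico_add_one_right_eq_Icc, Finset.sum_Ico_eq_sum_range] at h1
  rw [← Finset.Ico_add_one_right_eq_Icc, Finset.sum_Ico_eq_sum_range, Finset.sum_Ico_eq_sum_range]
  simp only [Nat.succ_sub_one, Nat.add_sub_cancel] at h1 ⊢
  rw [Finset.sum_range_succ'] at h1
  rw [Finset.sum_range_succ, Finset.sum_range_succ']
  have hL : ∀ i ∈ Finset.range m,
      rotMu (m + 1) μ₀ μ (1 + i) * (rotK (m + 1) k (1 + i) : ℝ)
        = (μ₀ / ((m : ℝ) + 1) + μ (i + 2)) * (k (i + 2) : ℝ) := by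
    intro i hi
    simp only [Finset.mem_range] at hi
    rw [rotMu, rotK]
    have h0 : 1 + i ≠ 0 := by omega
    have hn' : 1 + i ≠ m + 1 := by omega
    simp only [if_neg h0, if_neg hn', Nat.cast_add, Nat.cast_one]
    have : 1 + i + 1 = i + 2 := by omega
    rw [this]
  rw [Finset.sum_congr rfl hL]
  have hR : ∀ i ∈ Finset.range m,
      μ (1 + (i + 1)) * (k (1 + (i + 1)) : ℝ) = μ (i + 2) * (k (i + 2) : ℝ) := by
    intro i _
    have : 1 + (i + 1) = i + 2 := by omega
    rw [this]
  rw [Finset.sum_congr rfl hR]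
  have hR' : ∀ i ∈ Finset.range m, k (1 + (i + 1)) = k (i + 2) := by
    intro i _
    have : 1 + (i + 1) = i + 2 := by omega
    rw [this]
  rw [Finset.sum_congr rfl hR'] at h1
  have hS : (∑ i ∈ Finset.range m, (k (i + 2) : ℝ)) = -(k 1 : ℝ) := by
    have : (∑ i ∈ Finset.range m, k (i + 2)) = -(k 1) := by
      have := h1
      simp only [Nat.add_zero] at this ⊢
      omega
    exact_mod_cast congrArg (Int.cast : ℤ → ℝ) this
  have expand : (∑ i ∈ Finset.range m, (μ₀ / ((m : ℝ) + 1) + μ (i + 2)) * (k (i + 2) : ℝ))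
      = μ₀ / ((m : ℝ) + 1) * (∑ i ∈ Finset.range m, (k (i + 2) : ℝ))
        + ∑ i ∈ Finset.range m, μ (i + 2) * (k (i + 2) : ℝ) := by
    rw [Finset.mul_sum, ← Finset.sum_add_distrib]
    exact Finset.sum_congr rfl fun i _ => by ring
  rw [expand, hS]
  have hK0 : (rotK (m + 1) k 0 : ℝ) = (k 0 : ℝ) + (k 1 : ℝ) := by
    rw [rotK]; simp
  have hKn : (rotK (m + 1) k (1 + m) : ℝ) = (k 1 : ℝ) := by
    rw [rotK]
    have h0 : 1 + m ≠ 0 := by omega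
    rw [if_neg h0, if_pos (by omega)]
  have hMn : rotMu (m + 1) μ₀ μ (1 + m)
      = μ 1 - (((m : ℝ) + 1) - 1) * μ₀ / ((m : ℝ) + 1) := by
    rw [rotMu, if_pos (by omega)]
    push_cast
    ring_nf
  rw [hK0, hKn, hMn]
  have : (1 : ℕ) + 0 = 1 := rfl
  rw [this]
  field_simp
  ring
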